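/- arXiv:2102.13232 — 3 statements merged into one kernel-verified Lean document; each statement's English description precedes it below -/
import Mathlib

section
/- Let V be a symmetric positive definite (m×m) real matrix, U a (p×m) matrix of full row rank p, and C an m-vector satisfying U V⁻¹ C = 0 and CᵀV⁻¹C > 0. Let C* be an m×(m−p−1) matrix whose columns form a basis of the orthogonal complement (with respect to the inner product ⟨a,b⟩ = aᵀV⁻¹b) of the span of C and the rows of U. Then V = C*(C*ᵀV⁻¹C*)⁻¹C*ᵀ + C(CᵀV⁻¹C)⁻¹Cᵀ + Uᵀ(UV⁻¹Uᵀ)⁻¹U. -/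
open Matrix

lemma aux_mulVec_injective {r c : Type*} [Fintype r] [Fintype c]
    (A : Matrix r c ℝ) (h : A.rank = Fintype.card c) :
    Function.Injective A.mulVecLin := by
  rw [← LinearMap.ker_eq_bot]
  have h1 := LinearMap.finrank_range_add_finrank_ker A.mulVecLin
  rw [Module.finrank_pi] at h1
  rw [Matrix.rank] at h
  rw [← Submodule.finrank_eq_zero (R := ℝ)]
  omega

lemma aux_posdef_conj {n k : Type*} [Fintype n] [Fintype k]
    {B : Matrix n n ℝ} (hB : B.PosDef) (A : Matrix n k ℝ)
    (hA : Function.Injective A.mulVecLin) :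
    (Aᵀ * B * A).PosDef := by
  have hAH : Aᵀ = Aᴴ := (conjTranspose_eq_transpose_of_trivial A).symm
  rw [hAH]
  refine posDef_iff_dotProduct_mulVec.mpr ⟨isHermitian_conjTranspose_mul_mul _ hB.1, fun x hx => ?_⟩
  have hAx : A *ᵥ x ≠ 0 := by
    intro hc
    exact hx (by simpa using hA (a₁ := x) (a₂ := 0) (by simpa using hc))
  simpa only [star_mulVec, dotProduct_mulVec, vecMul_vecMul] using hB.dotProduct_mulVec_pos hAx

/-- Decomposition of a symmetric positive definite matrix `V` along
the `V⁻¹`-orthogonal directions spanned by `C`, the rows of `U`, and a basis `C*`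
of the `V⁻¹`-orthogonal complement:
`V = C*(C*ᵀV⁻¹C*)⁻¹C*ᵀ + C(CᵀV⁻¹C)⁻¹Cᵀ + Uᵀ(UV⁻¹Uᵀ)⁻¹U`. -/
theorem posdef_orthogonal_decomposition
    (m p : ℕ) (hpm : p + 1 ≤ m)
    (V : Matrix (Fin m) (Fin m) ℝ) (hV : V.PosDef)
    (U : Matrix (Fin p) (Fin m) ℝ) (hU : U.rank = p)
    (C : Matrix (Fin m) (Fin 1) ℝ)
    (hUC : U * V⁻¹ * C = 0)
    (hCpos : 0 < (Cᵀ * V⁻¹ * C) 0 0)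
    (Cstar : Matrix (Fin m) (Fin (m - p - 1)) ℝ)
    (hCstarRank : Cstar.rank = m - p - 1)
    (hCstarC : Cstarᵀ * V⁻¹ * C = 0)
    (hCstarU : Cstarᵀ * V⁻¹ * Uᵀ = 0) :
    V = Cstar * (Cstarᵀ * V⁻¹ * Cstar)⁻¹ * Cstarᵀ
        + C * (Cᵀ * V⁻¹ * C)⁻¹ * Cᵀ
        + Uᵀ * (U * V⁻¹ * Uᵀ)⁻¹ * U := by
  have hVi : (V⁻¹).PosDef := hV.inv
  have hViT : (V⁻¹)ᵀ = V⁻¹ := by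
    have h := hVi.isHermitian
    rwa [IsHermitian, conjTranspose_eq_transpose_of_trivial] at h
  -- transposed orthogonality relations
  have hCU : Cᵀ * V⁻¹ * Uᵀ = 0 := by
    have h := congrArg Matrix.transpose hUC
    simpa [Matrix.transpose_mul, hViT, Matrix.mul_assoc] using h
  have hUCs : U * V⁻¹ * Cstar = 0 := by
    have h := congrArg Matrix.transpose hCstarU
    simpa [Matrix.transpose_mul, hViT, Matrix.mul_assoc] using h
  have hCCs : Cᵀ * V⁻¹ * Cstar = 0 := by
    have h := congrArg Matrix.transpose hCstarC
    simpa [Matrix.transpose_mul, hViT, Matrix.mul_assoc] using h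
  -- Gram matrices are invertible
  have hGs : (Cstarᵀ * V⁻¹ * Cstar).PosDef := by
    refine aux_posdef_conj hVi Cstar (aux_mulVec_injective _ ?_)
    simp [hCstarRank]
  have hGu : (U * V⁻¹ * Uᵀ).PosDef := by
    have := aux_posdef_conj hVi Uᵀ (aux_mulVec_injective _ (by simp [Matrix.rank_transpose, hU]))
    simpa [Matrix.transpose_transpose] using this
  have hGsU : IsUnit (Cstarᵀ * V⁻¹ * Cstar) := hGs.isUnit
  have hGuU : IsUnit (U * V⁻¹ * Uᵀ) := hGu.isUnit
  have hGcU : IsUnit (Cᵀ * V⁻¹ * C) := by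
    rw [Matrix.isUnit_iff_isUnit_det, Matrix.det_fin_one]
    exact (isUnit_iff_ne_zero).mpr hCpos.ne'
  have hGsd : IsUnit (Cstarᵀ * V⁻¹ * Cstar).det := (Matrix.isUnit_iff_isUnit_det _).mp hGsU
  have hGcd : IsUnit (Cᵀ * V⁻¹ * C).det := (Matrix.isUnit_iff_isUnit_det _).mp hGcU
  have hGud : IsUnit (U * V⁻¹ * Uᵀ).det := (Matrix.isUnit_iff_isUnit_det _).mp hGuU
  set P : Matrix (Fin m) (Fin m) ℝ :=
    Cstar * (Cstarᵀ * V⁻¹ * Cstar)⁻¹ * Cstarᵀ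
      + C * (Cᵀ * V⁻¹ * C)⁻¹ * Cᵀ
      + Uᵀ * (U * V⁻¹ * Uᵀ)⁻¹ * U with hP
  -- projection identities
  have hPs : P * (V⁻¹ * Cstar) = Cstar := by
    have e1 : Cstar * (Cstarᵀ * V⁻¹ * Cstar)⁻¹ * Cstarᵀ * (V⁻¹ * Cstar) = Cstar := by
      calc Cstar * (Cstarᵀ * V⁻¹ * Cstar)⁻¹ * Cstarᵀ * (V⁻¹ * Cstar)
          = Cstar * ((Cstarᵀ * V⁻¹ * Cstar)⁻¹ * (Cstarᵀ * V⁻¹ * Cstar)) := by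
            simp [Matrix.mul_assoc]
        _ = Cstar := by rw [Matrix.nonsing_inv_mul _ hGsd, Matrix.mul_one]
    have e2 : C * (Cᵀ * V⁻¹ * C)⁻¹ * Cᵀ * (V⁻¹ * Cstar) = 0 := by
      calc C * (Cᵀ * V⁻¹ * C)⁻¹ * Cᵀ * (V⁻¹ * Cstar)
          = C * ((Cᵀ * V⁻¹ * C)⁻¹ * (Cᵀ * V⁻¹ * Cstar)) := by simp [Matrix.mul_assoc]
        _ = 0 := by rw [hCCs, Matrix.mul_zero, Matrix.mul_zero]
    have e3 : Uᵀ * (U * V⁻¹ * Uᵀ)⁻¹ * U * (V⁻¹ * Cstar) = 0 := by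
      calc Uᵀ * (U * V⁻¹ * Uᵀ)⁻¹ * U * (V⁻¹ * Cstar)
          = Uᵀ * ((U * V⁻¹ * Uᵀ)⁻¹ * (U * V⁻¹ * Cstar)) := by simp [Matrix.mul_assoc]
        _ = 0 := by rw [hUCs, Matrix.mul_zero, Matrix.mul_zero]
    rw [hP, Matrix.add_mul, Matrix.add_mul, e1, e2, e3, add_zero, add_zero]
  have hPc : P * (V⁻¹ * C) = C := by
    have e1 : Cstar * (Cstarᵀ * V⁻¹ * Cstar)⁻¹ * Cstarᵀ * (V⁻¹ * C) = 0 := by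
      calc Cstar * (Cstarᵀ * V⁻¹ * Cstar)⁻¹ * Cstarᵀ * (V⁻¹ * C)
          = Cstar * ((Cstarᵀ * V⁻¹ * Cstar)⁻¹ * (Cstarᵀ * V⁻¹ * C)) := by
            simp [Matrix.mul_assoc]
        _ = 0 := by rw [hCstarC, Matrix.mul_zero, Matrix.mul_zero]
    have e2 : C * (Cᵀ * V⁻¹ * C)⁻¹ * Cᵀ * (V⁻¹ * C) = C := by
      calc C * (Cᵀ * V⁻¹ * C)⁻¹ * Cᵀ * (V⁻¹ * C)
          = C * ((Cᵀ * V⁻¹ * C)⁻¹ * (Cᵀ * V⁻¹ * C)) := by simp [Matrix.mul_assoc]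
        _ = C := by rw [Matrix.nonsing_inv_mul _ hGcd, Matrix.mul_one]
    have e3 : Uᵀ * (U * V⁻¹ * Uᵀ)⁻¹ * U * (V⁻¹ * C) = 0 := by
      calc Uᵀ * (U * V⁻¹ * Uᵀ)⁻¹ * U * (V⁻¹ * C)
          = Uᵀ * ((U * V⁻¹ * Uᵀ)⁻¹ * (U * V⁻¹ * C)) := by simp [Matrix.mul_assoc]
        _ = 0 := by rw [hUC, Matrix.mul_zero, Matrix.mul_zero]
    rw [hP, Matrix.add_mul, Matrix.add_mul, e1, e2, e3, zero_add, add_zero]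
  have hPu : P * (V⁻¹ * Uᵀ) = Uᵀ := by
    have e1 : Cstar * (Cstarᵀ * V⁻¹ * Cstar)⁻¹ * Cstarᵀ * (V⁻¹ * Uᵀ) = 0 := by
      calc Cstar * (Cstarᵀ * V⁻¹ * Cstar)⁻¹ * Cstarᵀ * (V⁻¹ * Uᵀ)
          = Cstar * ((Cstarᵀ * V⁻¹ * Cstar)⁻¹ * (Cstarᵀ * V⁻¹ * Uᵀ)) := by
            simp [Matrix.mul_assoc]
        _ = 0 := by rw [hCstarU, Matrix.mul_zero, Matrix.mul_zero]
    have e2 : C * (Cᵀ * V⁻¹ * C)⁻¹ * Cᵀ * (V⁻¹ * Uᵀ) = 0 := by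
      calc C * (Cᵀ * V⁻¹ * C)⁻¹ * Cᵀ * (V⁻¹ * Uᵀ)
          = C * ((Cᵀ * V⁻¹ * C)⁻¹ * (Cᵀ * V⁻¹ * Uᵀ)) := by simp [Matrix.mul_assoc]
        _ = 0 := by rw [hCU, Matrix.mul_zero, Matrix.mul_zero]
    have e3 : Uᵀ * (U * V⁻¹ * Uᵀ)⁻¹ * U * (V⁻¹ * Uᵀ) = Uᵀ := by
      calc Uᵀ * (U * V⁻¹ * Uᵀ)⁻¹ * U * (V⁻¹ * Uᵀ)
          = Uᵀ * ((U * V⁻¹ * Uᵀ)⁻¹ * (U * V⁻¹ * Uᵀ)) := by simp [Matrix.mul_assoc]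
        _ = Uᵀ := by rw [Matrix.nonsing_inv_mul _ hGud, Matrix.mul_one]
    rw [hP, Matrix.add_mul, Matrix.add_mul, e1, e2, e3, zero_add, zero_add]
  -- the combined matrix W
  set W : Matrix (Fin m) (Fin (m - p - 1) ⊕ (Fin 1 ⊕ Fin p)) ℝ :=
    fromCols Cstar (fromCols C Uᵀ) with hW
  have hWT : Wᵀ = fromRows Cstarᵀ (fromRows Cᵀ U) := by
    simp [hW, transpose_fromCols, Matrix.transpose_transpose]
  have hGram : Wᵀ * V⁻¹ * W =
      fromBlocks (Cstarᵀ * V⁻¹ * Cstar) 0 0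
        (fromBlocks (Cᵀ * V⁻¹ * C) 0 0 (U * V⁻¹ * Uᵀ)) := by
    rw [hWT, hW]
    simp only [Matrix.fromRows_mul, Matrix.mul_fromCols, Matrix.fromRows_mul_fromCols,
      hCstarC, hCstarU, hCCs, hUCs, hCU, hUC, Matrix.fromCols_zero, Matrix.fromRows_zero,
      Matrix.fromCols_fromRows_eq_fromBlocks, Matrix.fromRows_fromCols_eq_fromBlocks]
    ext (i | i | i) (j | j | j) <;>
      simp [Matrix.fromBlocks, Matrix.fromRows, Matrix.fromCols] <;> rfl
  have hGramU : IsUnit (Wᵀ * V⁻¹ * W) := by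
    rw [hGram]
    exact Matrix.isUnit_fromBlocks_zero₂₁.mpr
      ⟨hGsU, Matrix.isUnit_fromBlocks_zero₂₁.mpr ⟨hGcU, hGuU⟩⟩
  -- W has full rank m
  have hcard : Fintype.card (Fin (m - p - 1) ⊕ (Fin 1 ⊕ Fin p)) = m := by
    simp; omega
  have hrankW : W.rank = m := by
    have h1 : (Wᵀ * V⁻¹ * W).rank = m := by
      rw [Matrix.rank_of_isUnit _ hGramU, hcard]
    have h2 : (Wᵀ * V⁻¹ * W).rank ≤ W.rank := by
      rw [Matrix.mul_assoc]
      exact (Matrix.rank_mul_le_right _ _).trans (le_of_eq rfl) |>.trans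
        (Matrix.rank_mul_le_right _ _)
    have h3 : W.rank ≤ m := by
      have := W.rank_le_card_width
      simpa [hcard] using this
    omega
  have hinj : Function.Injective (Wᵀ).mulVecLin := by
    refine aux_mulVec_injective _ ?_
    rw [Matrix.rank_transpose, hrankW, Fintype.card_fin]
  -- P * V⁻¹ fixes W
  have hPW : (P * V⁻¹ - 1) * W = 0 := by
    rw [Matrix.sub_mul, Matrix.one_mul, sub_eq_zero, hW, Matrix.mul_fromCols,
      Matrix.mul_fromCols]
    rw [show P * V⁻¹ * Cstar = P * (V⁻¹ * Cstar) from Matrix.mul_assoc _ _ _,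
      show P * V⁻¹ * C = P * (V⁻¹ * C) from Matrix.mul_assoc _ _ _,
      show P * V⁻¹ * Uᵀ = P * (V⁻¹ * Uᵀ) from Matrix.mul_assoc _ _ _,
      hPs, hPc, hPu]
  -- conclude P * V⁻¹ = 1
  have hMT : Wᵀ * (P * V⁻¹ - 1)ᵀ = 0 := by
    have h := congrArg Matrix.transpose hPW
    rwa [Matrix.transpose_mul, Matrix.transpose_zero] at h
  have hM : P * V⁻¹ - 1 = 0 := by
    have hcols : ∀ j, (fun i => (P * V⁻¹ - 1)ᵀ i j) = 0 := by
      intro j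
      apply hinj
      rw [map_zero]
      funext k
      have h0 := congrFun (congrFun hMT k) j
      simp only [Matrix.mul_apply, Matrix.zero_apply] at h0
      simp only [Matrix.mulVecLin_apply, Matrix.mulVec, dotProduct, Pi.zero_apply]
      exact h0
    ext i j
    exact congrFun (hcols i) j
  have hPV : P * V⁻¹ = 1 := by rwa [sub_eq_zero] at hM
  have hVdet : IsUnit V.det := (Matrix.isUnit_iff_isUnit_det V).mp hV.isUnit
  calc V = 1 * V := (Matrix.one_mul V).symm
    _ = P * V⁻¹ * V := by rw [hPV]
    _ = P * (V⁻¹ * V) := Matrix.mul_assoc _ _ _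
    _ = P := by rw [Matrix.nonsing_inv_mul _ hVdet, Matrix.mul_one]
end

section
/- Let V_m be symmetric positive definite partitioned as [[V_{m−1}, v],[vᵀ, c]], and let U_m = (U_{m−1}, u_m) where U_{m−1} consists of the first block of columns. Define J_m = U_m V_m⁻¹ U_mᵀ and J_{m−1} = U_{m−1} V_{m−1}⁻¹ U_{m−1}ᵀ. If both J_m and J_{m−1} are invertible, then J_m ≥ J_{m−1} in the Loewner order; consequently J_m⁻¹ ≤ J_{m−1}⁻¹. -/
open Matrix

section Aux
variable {n : Type*} [Fintype n] [DecidableEq n]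

lemma aux_psd_isUnit_posDef {M : Matrix n n ℝ} (h : M.PosSemidef) (hd : IsUnit M.det) :
    M.PosDef := by
  refine Matrix.PosDef.of_dotProduct_mulVec_pos h.isHermitian fun x hx => ?_
  rcases (h.dotProduct_mulVec_nonneg x).lt_or_eq with hlt | heq
  · simpa using hlt
  · exfalso
    apply hx
    have h0 : star x ⬝ᵥ M *ᵥ x = 0 := by simpa using heq.symm
    have := (h.dotProduct_mulVec_zero_iff x).mp h0
    have hM : IsUnit M := (Matrix.isUnit_iff_isUnit_det M).mpr hd
    have := congrArg (fun y => M⁻¹ *ᵥ y) this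
    simpa [Matrix.mulVec_mulVec, Matrix.nonsing_inv_mul M hd] using this

open scoped MatrixOrder in
lemma aux_inv_sub_one_psd {N : Matrix n n ℝ} (hN : N.PosDef) (h : (1 - N).PosSemidef) :
    (N⁻¹ - 1).PosSemidef := by
  set R := CFC.sqrt N with hR
  have hRR : R * R = N := CFC.sqrt_mul_sqrt_self N hN.posSemidef.nonneg
  have hRdet : IsUnit R.det := by
    have : R.det * R.det = N.det := by rw [← Matrix.det_mul, hRR]
    exact isUnit_of_mul_isUnit_left (this ▸ hN.det_pos.ne'.isUnit)
  have hRH : R.IsHermitian := (CFC.sqrt_nonneg N).posSemidef.isHermitian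
  have hRiH : (R⁻¹).IsHermitian := hRH.inv
  have hNinv : R⁻¹ * R⁻¹ = N⁻¹ := by rw [← Matrix.mul_inv_rev, hRR]
  set M := R - R⁻¹ with hM
  have hMH : M.IsHermitian := hRH.sub hRiH
  have hMM : M * Mᴴ = N + N⁻¹ - 1 - 1 := by
    rw [hMH.eq, hM, sub_mul, mul_sub, mul_sub, hRR,
      Matrix.mul_nonsing_inv R hRdet, Matrix.nonsing_inv_mul R hRdet, hNinv]
    abel
  have key : N⁻¹ - 1 = M * Mᴴ + (1 - N) := by rw [hMM]; abel
  rw [key]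
  exact (Matrix.posSemidef_self_mul_conjTranspose M).add h

open scoped MatrixOrder in
lemma aux_inv_antitone {A B : Matrix n n ℝ} (hA : A.PosDef) (hB : B.PosDef)
    (h : (A - B).PosSemidef) : (B⁻¹ - A⁻¹).PosSemidef := by
  set T := CFC.sqrt A with hT
  have hTT : T * T = A := CFC.sqrt_mul_sqrt_self A hA.posSemidef.nonneg
  have hTdet : IsUnit T.det := by
    have : T.det * T.det = A.det := by rw [← Matrix.det_mul, hTT]
    exact isUnit_of_mul_isUnit_left (this ▸ hA.det_pos.ne'.isUnit)
  have hTH : T.IsHermitian := (CFC.sqrt_nonneg A).posSemidef.isHermitian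
  have hTiH : (T⁻¹)ᴴ = T⁻¹ := hTH.inv.eq
  have hTiT : T⁻¹ * T = 1 := Matrix.nonsing_inv_mul T hTdet
  have hTTi : T * T⁻¹ = 1 := Matrix.mul_nonsing_inv T hTdet
  set N := T⁻¹ * B * T⁻¹ with hN
  have hNpsd : N.PosSemidef := by
    have := hB.posSemidef.mul_mul_conjTranspose_same T⁻¹
    rwa [hTiH] at this
  have hNdet : IsUnit N.det := by
    rw [hN, Matrix.det_mul, Matrix.det_mul, Matrix.det_nonsing_inv]
    exact ((isUnit_ringInverse.mpr hTdet).mul hB.det_pos.ne'.isUnit).mul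
      (isUnit_ringInverse.mpr hTdet)
  have hNpd : N.PosDef := aux_psd_isUnit_posDef hNpsd hNdet
  have h1 : (1 : Matrix n n ℝ) = T⁻¹ * A * T⁻¹ := by
    rw [← hTT, ← Matrix.mul_assoc T⁻¹ T T, hTiT, Matrix.one_mul, hTTi]
  have hsub : (1 - N).PosSemidef := by
    have : (1 : Matrix n n ℝ) - N = T⁻¹ * (A - B) * (T⁻¹)ᴴ := by
      rw [hTiH, hN, Matrix.mul_sub, Matrix.sub_mul, ← h1]
    rw [this]
    exact h.mul_mul_conjTranspose_same T⁻¹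
  have hcore := aux_inv_sub_one_psd hNpd hsub
  have hNinv : N⁻¹ = T * B⁻¹ * T := by
    rw [hN, Matrix.mul_inv_rev, Matrix.mul_inv_rev,
      Matrix.nonsing_inv_nonsing_inv T hTdet, Matrix.mul_assoc]
  have hfinal : B⁻¹ - A⁻¹ = T⁻¹ * (N⁻¹ - 1) * (T⁻¹)ᴴ := by
    rw [hTiH, Matrix.mul_sub, Matrix.sub_mul, hNinv, Matrix.mul_one,
      ← Matrix.mul_inv_rev, hTT]
    congr 1
    rw [← Matrix.mul_assoc, ← Matrix.mul_assoc, hTiT, Matrix.one_mul,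
      Matrix.mul_assoc, hTTi, Matrix.mul_one]
  rw [hfinal]
  exact hcore.mul_mul_conjTranspose_same T⁻¹

end Aux

lemma aux_pad_psd {k : ℕ} {S : Matrix Unit Unit ℝ} (hS : S.PosSemidef) :
    (Matrix.fromBlocks (0 : Matrix (Fin k) (Fin k) ℝ) 0 0 S).PosSemidef := by
  rw [Matrix.posSemidef_iff_dotProduct_mulVec]
  constructor
  · unfold Matrix.IsHermitian
    rw [Matrix.fromBlocks_conjTranspose]
    simp
    have := hS.isHermitian.eq
    rwa [Matrix.conjTranspose_eq_transpose_of_trivial] at this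
  · intro x
    have := hS.dotProduct_mulVec_nonneg (fun u => x (Sum.inr u))
    simpa [Matrix.fromBlocks_mulVec, dotProduct, Fintype.sum_sum_type,
      Matrix.mulVec, Matrix.fromBlocks] using this

lemma aux_proj {k p : ℕ} (Um : Matrix (Fin p) (Fin k ⊕ Unit) ℝ)
    (W : Matrix (Fin k) (Fin k) ℝ) :
    Um * (Matrix.fromBlocks W 0 0 0 : Matrix (Fin k ⊕ Unit) (Fin k ⊕ Unit) ℝ) * Umᵀ
      = (Um.submatrix id Sum.inl) * W * (Um.submatrix id Sum.inl)ᵀ := by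
  ext i j
  simp [Matrix.mul_apply, Fintype.sum_sum_type, Finset.sum_mul, Matrix.fromBlocks]

/-- With `V_m = [[V_{m−1}, v],[vᵀ, c]]` symmetric positive definite,
`U_m = (U_{m−1}, u_m)`, `J_m = U_m V_m⁻¹ U_mᵀ`, `J_{m−1} = U_{m−1} V_{m−1}⁻¹ U_{m−1}ᵀ`
both invertible, one has `J_m ≥ J_{m−1}` and hence `J_m⁻¹ ≤ J_{m−1}⁻¹` in the
Loewner order: adding an estimating equation cannot increase the asymptotic
variance. -/
theorem information_monotone
    (k p : ℕ)
    (V : Matrix (Fin k) (Fin k) ℝ) (hV : V.PosDef)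
    (v : Fin k → ℝ) (c : ℝ)
    (Vm : Matrix (Fin k ⊕ Unit) (Fin k ⊕ Unit) ℝ)
    (hVm : Vm = Matrix.fromBlocks V (Matrix.of fun i (_ : Unit) => v i)
      (Matrix.of fun (_ : Unit) j => v j) (Matrix.of fun (_ : Unit) (_ : Unit) => c))
    (hVmpd : Vm.PosDef)
    (Um : Matrix (Fin p) (Fin k ⊕ Unit) ℝ)
    (hJm : IsUnit (Um * Vm⁻¹ * Umᵀ).det)
    (hJm1 : IsUnit ((Um.submatrix id Sum.inl) * V⁻¹ * (Um.submatrix id Sum.inl)ᵀ).det) :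
    (Um * Vm⁻¹ * Umᵀ - (Um.submatrix id Sum.inl) * V⁻¹ * (Um.submatrix id Sum.inl)ᵀ).PosSemidef
      ∧ (((Um.submatrix id Sum.inl) * V⁻¹ * (Um.submatrix id Sum.inl)ᵀ)⁻¹
          - (Um * Vm⁻¹ * Umᵀ)⁻¹).PosSemidef := by
  have hVdet : IsUnit V.det := hV.det_pos.ne'.isUnit
  have hVmdet : IsUnit Vm.det := hVmpd.det_pos.ne'.isUnit
  set B : Matrix (Fin k) Unit ℝ := Matrix.of fun i (_ : Unit) => v i with hB
  have hBH : (Matrix.of fun (_ : Unit) j => v j) = Bᴴ := by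
    ext i j; simp [hB]
  set c' : Matrix Unit Unit ℝ := Matrix.of fun (_ : Unit) (_ : Unit) => c with hc'
  rw [hBH] at hVm
  -- Schur complement is PSD
  haveI : Invertible V := V.invertibleOfIsUnitDet hVdet
  have hS : (c' - Bᴴ * V⁻¹ * B).PosSemidef := by
    have := hVmpd.posSemidef
    rw [hVm] at this
    exact (Matrix.PosDef.fromBlocks₁₁ B c' hV).mp this
  set D : Matrix (Fin k ⊕ Unit) (Fin k ⊕ Unit) ℝ := Matrix.fromBlocks V⁻¹ 0 0 0 with hD
  -- Vm - Vm * D * Vm = fromBlocks 0 0 0 (Schur complement)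
  have e1 : Vm * D = Matrix.fromBlocks 1 0 (Bᴴ * V⁻¹) 0 := by
    rw [hVm, hD, Matrix.fromBlocks_multiply]
    simp [Matrix.mul_nonsing_inv V hVdet]
  have e2 : Vm * D * Vm = Matrix.fromBlocks V B Bᴴ (Bᴴ * V⁻¹ * B) := by
    rw [e1, hVm, Matrix.fromBlocks_multiply, Matrix.mul_assoc Bᴴ V⁻¹ V,
      Matrix.nonsing_inv_mul V hVdet, Matrix.mul_one]
    simp only [Matrix.one_mul, Matrix.zero_mul, Matrix.mul_zero, add_zero, zero_add]
  have e3 : Vm - Vm * D * Vm = Matrix.fromBlocks 0 0 0 (c' - Bᴴ * V⁻¹ * B) := by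
    rw [e2, hVm]
    ext (i | i) (j | j) <;> simp [Matrix.fromBlocks]
  -- Vm⁻¹ - D is PSD
  have hVmiH : (Vm⁻¹)ᴴ = Vm⁻¹ := hVmpd.isHermitian.inv.eq
  have e4 : Vm⁻¹ - D = Vm⁻¹ * (Vm - Vm * D * Vm) * (Vm⁻¹)ᴴ := by
    rw [hVmiH, Matrix.mul_sub, Matrix.sub_mul, Matrix.nonsing_inv_mul Vm hVmdet,
      Matrix.one_mul, Matrix.mul_assoc Vm D Vm, ← Matrix.mul_assoc Vm⁻¹ Vm (D * Vm),
      Matrix.nonsing_inv_mul Vm hVmdet, Matrix.one_mul,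
      Matrix.mul_assoc D Vm Vm⁻¹, Matrix.mul_nonsing_inv Vm hVmdet, Matrix.mul_one]
  have hVmD : (Vm⁻¹ - D).PosSemidef := by
    rw [e4, e3]
    exact (aux_pad_psd hS).mul_mul_conjTranspose_same Vm⁻¹
  -- Part 1
  have hUmH : Umᴴ = Umᵀ := Matrix.conjTranspose_eq_transpose_of_trivial Um
  have part1 : (Um * Vm⁻¹ * Umᵀ
      - (Um.submatrix id Sum.inl) * V⁻¹ * (Um.submatrix id Sum.inl)ᵀ).PosSemidef := by
    have hconj := hVmD.mul_mul_conjTranspose_same Um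
    rw [hUmH, Matrix.mul_sub, Matrix.sub_mul, aux_proj Um V⁻¹] at hconj
    exact hconj
  refine ⟨part1, ?_⟩
  -- Part 2
  have hJmPsd : (Um * Vm⁻¹ * Umᵀ).PosSemidef := by
    have := hVmpd.inv.posSemidef.mul_mul_conjTranspose_same Um
    rwa [hUmH] at this
  have hJm1Psd : ((Um.submatrix id Sum.inl) * V⁻¹ * (Um.submatrix id Sum.inl)ᵀ).PosSemidef := by
    have := hV.inv.posSemidef.mul_mul_conjTranspose_same (Um.submatrix id Sum.inl)
    rwa [Matrix.conjTranspose_eq_transpose_of_trivial] at this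
  exact aux_inv_antitone (aux_psd_isUnit_posDef hJmPsd hJm)
    (aux_psd_isUnit_posDef hJm1Psd hJm1) part1
end

section
/- Let V_m be symmetric positive definite partitioned as [[V_{m−1}, v],[vᵀ, c]] and U_m = (U_{m−1}, u_m) with J_m = U_m V_m⁻¹ U_mᵀ and J_{m−1} = U_{m−1} V_{m−1}⁻¹ U_{m−1}ᵀ both invertible. Then V_m⁻¹(V_m − U_mᵀ J_m⁻¹ U_m)V_m⁻¹ ≥ [[V_{m−1}⁻¹(V_{m−1} − U_{m−1}ᵀ J_{m−1}⁻¹ U_{m−1})V_{m−1}⁻¹, 0],[0,0]] in the Loewner order. -/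
set_option maxHeartbeats 1000000


open Matrix

/-- With `V_m = [[V_{m−1}, v],[vᵀ, c]]` symmetric positive definite,
`U_m = (U_{m−1}, u_m)`, `J_m = U_m V_m⁻¹ U_mᵀ` and `J_{m−1} = U_{m−1} V_{m−1}⁻¹ U_{m−1}ᵀ`
both invertible, one has
`V_m⁻¹(V_m − U_mᵀ J_m⁻¹ U_m)V_m⁻¹ ≥ [[V_{m−1}⁻¹(V_{m−1} − U_{m−1}ᵀ J_{m−1}⁻¹ U_{m−1})V_{m−1}⁻¹, 0],[0,0]]`
in the Loewner order. -/
theorem variance_monotone_cdf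
    (k p : ℕ)
    (V : Matrix (Fin k) (Fin k) ℝ) (hV : V.PosDef)
    (v : Fin k → ℝ) (c : ℝ)
    (Vm : Matrix (Fin k ⊕ Unit) (Fin k ⊕ Unit) ℝ)
    (hVm : Vm = Matrix.fromBlocks V (Matrix.of fun i (_ : Unit) => v i)
      (Matrix.of fun (_ : Unit) j => v j) (Matrix.of fun (_ : Unit) (_ : Unit) => c))
    (hVmpd : Vm.PosDef)
    (Um : Matrix (Fin p) (Fin k ⊕ Unit) ℝ)
    (hJm : IsUnit (Um * Vm⁻¹ * Umᵀ).det)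
    (hJm1 : IsUnit ((Um.submatrix id Sum.inl) * V⁻¹ * (Um.submatrix id Sum.inl)ᵀ).det) :
    (Vm⁻¹ * (Vm - Umᵀ * (Um * Vm⁻¹ * Umᵀ)⁻¹ * Um) * Vm⁻¹
      - Matrix.fromBlocks
          (V⁻¹ * (V - (Um.submatrix id Sum.inl)ᵀ
            * ((Um.submatrix id Sum.inl) * V⁻¹ * (Um.submatrix id Sum.inl)ᵀ)⁻¹
            * (Um.submatrix id Sum.inl)) * V⁻¹) 0 0 0).PosSemidef := by
  classical
  set U1 : Matrix (Fin p) (Fin k) ℝ := Um.submatrix id Sum.inl with hU1def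
  set W : Matrix (Fin k ⊕ Unit) (Fin k ⊕ Unit) ℝ := Vm⁻¹ with hWdef
  set J : Matrix (Fin p) (Fin p) ℝ := Um * W * Umᵀ with hJdef
  set J1 : Matrix (Fin p) (Fin p) ℝ := U1 * V⁻¹ * U1ᵀ with hJ1def
  -- basic symmetry facts
  have hVsym : Vᵀ = V := by
    have := hV.isHermitian
    rwa [Matrix.IsHermitian, conjTranspose_eq_transpose_of_trivial] at this
  have hVmsym : Vmᵀ = Vm := by
    have := hVmpd.isHermitian
    rwa [Matrix.IsHermitian, conjTranspose_eq_transpose_of_trivial] at this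
  have hWsym : Wᵀ = W := by
    rw [hWdef, transpose_nonsing_inv, hVmsym]
  have hVisym : (V⁻¹)ᵀ = V⁻¹ := by rw [transpose_nonsing_inv, hVsym]
  -- invertibility facts
  have hVmdet : IsUnit Vm.det := (Matrix.isUnit_iff_isUnit_det _).mp hVmpd.isUnit
  have hVdet : IsUnit V.det := (Matrix.isUnit_iff_isUnit_det _).mp hV.isUnit
  have hWVm : W * Vm = 1 := Matrix.nonsing_inv_mul _ hVmdet
  have hVmW : Vm * W = 1 := Matrix.mul_nonsing_inv _ hVmdet
  have hViV : V⁻¹ * V = 1 := Matrix.nonsing_inv_mul _ hVdet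
  have hVVi : V * V⁻¹ = 1 := Matrix.mul_nonsing_inv _ hVdet
  have hJJi : J * J⁻¹ = 1 := Matrix.mul_nonsing_inv _ hJm
  have hJ1Ji : J1 * J1⁻¹ = 1 := Matrix.mul_nonsing_inv _ hJm1
  have hJsym : Jᵀ = J := by
    rw [hJdef, Matrix.transpose_mul, Matrix.transpose_mul, transpose_transpose, hWsym,
      Matrix.mul_assoc]
  have hJisym : (J⁻¹)ᵀ = J⁻¹ := by rw [transpose_nonsing_inv, hJsym]
  have hJ1sym : J1ᵀ = J1 := by
    rw [hJ1def, Matrix.transpose_mul, Matrix.transpose_mul, transpose_transpose, hVisym,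
      Matrix.mul_assoc]
  have hJ1isym : (J1⁻¹)ᵀ = J1⁻¹ := by rw [transpose_nonsing_inv, hJ1sym]
  -- the embedding matrix
  set E : Matrix (Fin k) (Fin k ⊕ Unit) ℝ := fromCols 1 0 with hEdef
  have hUmE : Um * Eᵀ = U1 := by
    rw [hEdef, transpose_fromCols, transpose_one, transpose_zero,
      ← fromCols_toCols Um, fromCols_mul_fromRows]
    simp only [Matrix.mul_one, Matrix.mul_zero, add_zero]
    rfl
  have hEVmE : E * Vm * Eᵀ = V := by
    rw [hEdef, hVm, transpose_fromCols, transpose_one, transpose_zero,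
      fromCols_mul_fromBlocks, fromCols_mul_fromRows]
    simp
  -- P, B, Q
  set P : Matrix (Fin k ⊕ Unit) (Fin k ⊕ Unit) ℝ := W - W * Umᵀ * J⁻¹ * Um * W with hPdef
  set B : Matrix (Fin k) (Fin k) ℝ := V⁻¹ - V⁻¹ * U1ᵀ * J1⁻¹ * U1 * V⁻¹ with hBdef
  set Q : Matrix (Fin k ⊕ Unit) (Fin k ⊕ Unit) ℝ := Eᵀ * B * E with hQdef
  clear_value U1 W J J1 E P B Q
  -- rewrite the goal as (P - Q).PosSemidef
  have hgoal1 : W * (Vm - Umᵀ * J⁻¹ * Um) * W = P := by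
    rw [hPdef, Matrix.mul_sub, Matrix.sub_mul, hWVm, Matrix.one_mul]
    rw [sub_right_inj]
    simp only [Matrix.mul_assoc]
  have hgoal2 : Matrix.fromBlocks (V⁻¹ * (V - U1ᵀ * J1⁻¹ * U1) * V⁻¹) 0 0 0 = Q := by
    have hB : V⁻¹ * (V - U1ᵀ * J1⁻¹ * U1) * V⁻¹ = B := by
      rw [hBdef, Matrix.mul_sub, Matrix.sub_mul, hViV, Matrix.one_mul]
      rw [sub_right_inj]
      simp only [Matrix.mul_assoc]
    rw [hQdef, ← hB, hEdef, transpose_fromCols, transpose_one, transpose_zero,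
      fromRows_mul, fromRows_mul_fromCols]
    simp
  rw [hgoal1, hgoal2]
  -- key annihilation identities
  have hU1B : U1 * B = 0 := by
    rw [hBdef, Matrix.mul_sub]
    have h : U1 * (V⁻¹ * U1ᵀ * J1⁻¹ * U1 * V⁻¹) = U1 * V⁻¹ * U1ᵀ * J1⁻¹ * (U1 * V⁻¹) := by
      simp only [Matrix.mul_assoc]
    rw [h, ← hJ1def, hJ1Ji, Matrix.one_mul, sub_self]
  have hUmP : Um * P = 0 := by
    rw [hPdef, Matrix.mul_sub]
    have h : Um * (W * Umᵀ * J⁻¹ * Um * W) = Um * W * Umᵀ * J⁻¹ * (Um * W) := by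
      simp only [Matrix.mul_assoc]
    rw [h, ← hJdef, hJJi, Matrix.one_mul, sub_self]
  have hUmQ : Um * Q = 0 := by
    rw [hQdef, ← Matrix.mul_assoc, ← Matrix.mul_assoc, hUmE, hU1B, Matrix.zero_mul]
  -- products
  have hPVm : P * Vm = 1 - W * Umᵀ * J⁻¹ * Um := by
    rw [hPdef, Matrix.sub_mul, hWVm]
    rw [sub_right_inj]
    calc W * Umᵀ * J⁻¹ * Um * W * Vm = W * Umᵀ * J⁻¹ * Um * (W * Vm) := by simp only [Matrix.mul_assoc]
      _ = W * Umᵀ * J⁻¹ * Um := by rw [hWVm, Matrix.mul_one]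
  have hPVmP : P * Vm * P = P := by
    rw [hPVm, Matrix.sub_mul, Matrix.one_mul]
    calc P - W * Umᵀ * J⁻¹ * Um * P = P - W * Umᵀ * J⁻¹ * (Um * P) := by
          rw [sub_right_inj]; simp only [Matrix.mul_assoc]
      _ = P := by rw [hUmP, Matrix.mul_zero, sub_zero]
  have hPVmQ : P * Vm * Q = Q := by
    rw [hPVm, Matrix.sub_mul, Matrix.one_mul]
    calc Q - W * Umᵀ * J⁻¹ * Um * Q = Q - W * Umᵀ * J⁻¹ * (Um * Q) := by
          rw [sub_right_inj]; simp only [Matrix.mul_assoc]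
      _ = Q := by rw [hUmQ, Matrix.mul_zero, sub_zero]
  have hBVB : B * V * B = B := by
    have hBV : B * V = 1 - V⁻¹ * U1ᵀ * J1⁻¹ * U1 := by
      rw [hBdef, Matrix.sub_mul, hViV]
      rw [sub_right_inj]
      calc V⁻¹ * U1ᵀ * J1⁻¹ * U1 * V⁻¹ * V = V⁻¹ * U1ᵀ * J1⁻¹ * U1 * (V⁻¹ * V) := by
            simp only [Matrix.mul_assoc]
        _ = V⁻¹ * U1ᵀ * J1⁻¹ * U1 := by rw [hViV, Matrix.mul_one]
    rw [hBV, Matrix.sub_mul, Matrix.one_mul]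
    calc B - V⁻¹ * U1ᵀ * J1⁻¹ * U1 * B = B - V⁻¹ * U1ᵀ * J1⁻¹ * (U1 * B) := by
          rw [sub_right_inj]; simp only [Matrix.mul_assoc]
      _ = B := by rw [hU1B, Matrix.mul_zero, sub_zero]
  have hQVmQ : Q * Vm * Q = Q := by
    calc Q * Vm * Q = Eᵀ * B * (E * Vm * Eᵀ) * B * E := by rw [hQdef]; simp only [Matrix.mul_assoc]
      _ = Eᵀ * (B * V * B) * E := by rw [hEVmE]; simp only [Matrix.mul_assoc]
      _ = Q := by rw [hBVB, hQdef]
  -- symmetry of P and Q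
  have hBsym : Bᵀ = B := by
    rw [hBdef, transpose_sub, hVisym]
    rw [sub_right_inj]
    simp only [Matrix.transpose_mul, transpose_transpose, hVisym, hJ1isym]
    simp only [Matrix.mul_assoc]
  have hPsym : Pᵀ = P := by
    rw [hPdef, transpose_sub, hWsym]
    rw [sub_right_inj]
    simp only [Matrix.transpose_mul, transpose_transpose, hWsym, hJisym]
    simp only [Matrix.mul_assoc]
  have hQsym : Qᵀ = Q := by
    rw [hQdef, Matrix.transpose_mul, Matrix.transpose_mul, transpose_transpose, hBsym,
      Matrix.mul_assoc]
  have hQVmP : Q * Vm * P = Q := by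
    have h := congrArg Matrix.transpose hPVmQ
    rw [Matrix.transpose_mul, Matrix.transpose_mul, hPsym, hQsym, hVmsym] at h
    rw [← Matrix.mul_assoc] at h
    exact h
  -- conclude
  have hMsym : (P - Q)ᵀ = P - Q := by rw [transpose_sub, hPsym, hQsym]
  have hkey : (P - Q)ᵀ * Vm * (P - Q) = P - Q := by
    rw [hMsym]
    calc (P - Q) * Vm * (P - Q)
        = P * Vm * (P - Q) - Q * Vm * (P - Q) := by rw [Matrix.sub_mul, Matrix.sub_mul]
      _ = (P * Vm * P - P * Vm * Q) - (Q * Vm * P - Q * Vm * Q) := by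
          rw [Matrix.mul_sub, Matrix.mul_sub]
      _ = P - Q := by rw [hPVmP, hPVmQ, hQVmP, hQVmQ]; abel
  have hps := hVmpd.posSemidef.conjTranspose_mul_mul_same (P - Q)
  rw [conjTranspose_eq_transpose_of_trivial, hkey] at hps
  exact hps
end
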